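/- Let G be a simple directed graph with m vertices and n edges, with incidence matrix A ∈ ℝ^{m×n}, and suppose the nullspace of A is nontrivial. Then the maximum abstract simplicial complex associated with A equals {S ⊆ U_n : |S ∩ supp(z)| / ‖z‖₀ < 1/2 for every z ∈ W₁(G)}; that is, S belongs to T_max(A) if and only if for every simple cycle of G, S contains strictly fewer than half of the edges of that cycle. -/
import Mathlib


/-- The ℓ₁ norm of a vector in ℝⁿ. -/
noncomputable def l1 {n : ℕ} (x : Fin n → ℝ) : ℝ := ∑ i, |x i|

/-- The ℓ₁ norm of the restriction of a vector to an index set `S`. -/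
noncomputable def l1S {n : ℕ} (S : Finset (Fin n)) (x : Fin n → ℝ) : ℝ := ∑ i ∈ S, |x i|

/-- The support of a vector, as a finite index set. -/
noncomputable def suppF {n : ℕ} (x : Fin n → ℝ) : Finset (Fin n) :=
  Finset.univ.filter (fun i => x i ≠ 0)

/-- A directed graph on `m` vertices with `n` edges given by `E : Fin n → Fin m × Fin m`
(each edge is an ordered pair (initial vertex, terminal vertex)) is simple if it has no
self-loops and any two vertices are connected by at most one edge (in either direction). -/
def IsSimpleDigraph {m n : ℕ} (E : Fin n → Fin m × Fin m) : Prop :=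
  (∀ j, (E j).1 ≠ (E j).2) ∧
  ∀ j k, j ≠ k → E j ≠ E k ∧ E j ≠ ((E k).2, (E k).1)

/-- The incidence matrix `A ∈ ℝ^{m×n}` of a directed graph. -/
def IncMatrix {m n : ℕ} (E : Fin n → Fin m × Fin m) : Matrix (Fin m) (Fin n) ℝ :=
  Matrix.of fun i j => if (E j).1 = i then -1 else if (E j).2 = i then 1 else 0

/-- Cyclic successor on `Fin len`. -/
def cyc {len : ℕ} (i : Fin len) : Fin len := ⟨(i.1 + 1) % len, Nat.mod_lt _ i.pos⟩

/-- A simple cycle of the directed graph `E`: a cyclic sequence of at least 3 distinct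
vertices, each consecutive pair being joined by an edge (traversed in either direction). -/
structure SimpleCycleIn (m n : ℕ) (E : Fin n → Fin m × Fin m) where
  len : ℕ
  hlen : 3 ≤ len
  vert : Fin len → Fin m
  inj : Function.Injective vert
  edges : ∀ i : Fin len, ∃ j : Fin n,
    E j = (vert i, vert (cyc i)) ∨ E j = (vert (cyc i), vert i)

/-- The signed characteristic vector `w(C) ∈ {-1,0,1}ⁿ` of an oriented simple cycle. -/
noncomputable def sChar {m n : ℕ} {E : Fin n → Fin m × Fin m}
    (C : SimpleCycleIn m n E) : Fin n → ℝ := fun j =>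
  if ∃ i, E j = (C.vert i, C.vert (cyc i)) then 1
  else if ∃ i, E j = (C.vert (cyc i), C.vert i) then -1 else 0

/-- `W₁(G)`: the set of ℓ₁-normalized signed characteristic vectors of simple cycles. -/
noncomputable def W1 {m n : ℕ} (E : Fin n → Fin m × Fin m) : Set (Fin n → ℝ) :=
  {x | ∃ C : SimpleCycleIn m n E, x = (l1 (sChar C))⁻¹ • sChar C}

/-- The maximum abstract simplicial complex associated with a matrix. -/
def Tmax {m n : ℕ} (Φ : Matrix (Fin m) (Fin n) ℝ) : Set (Finset (Fin n)) :=
  {S | ∀ η : Fin n → ℝ, Φ.mulVec η = 0 → η ≠ 0 → l1S S η < l1S Sᶜ η}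

section
variable {m n : ℕ} {E : Fin n → Fin m × Fin m}

lemma cyc_val {len : ℕ} (i : Fin len) : (cyc i).1 = (i.1 + 1) % len := rfl

lemma cyc_inj {len : ℕ} : Function.Injective (cyc (len := len)) := by
  intro a b h
  have h' : (a.1 + 1) % len = (b.1 + 1) % len := congrArg Fin.val h
  have ha := a.2; have hb := b.2
  rcases Nat.lt_or_ge (a.1 + 1) len with h1 | h1 <;>
    rcases Nat.lt_or_ge (b.1 + 1) len with h2 | h2
  · rw [Nat.mod_eq_of_lt h1, Nat.mod_eq_of_lt h2] at h'; exact Fin.ext (by omega)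
  · have : b.1 + 1 = len := by omega
    rw [Nat.mod_eq_of_lt h1, this, Nat.mod_self] at h'; omega
  · have : a.1 + 1 = len := by omega
    rw [this, Nat.mod_self, Nat.mod_eq_of_lt h2] at h'; omega
  · exact Fin.ext (by omega)

lemma cyc_ne {len : ℕ} (hlen : 3 ≤ len) (i : Fin len) : cyc i ≠ i := by
  intro h
  have h' : (i.1 + 1) % len = i.1 := congrArg Fin.val h
  have := i.2
  rcases Nat.lt_or_ge (i.1 + 1) len with h1 | h1
  · rw [Nat.mod_eq_of_lt h1] at h'; omega
  · have : i.1 + 1 = len := by omega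
    rw [this, Nat.mod_self] at h'; omega

lemma cyc_cyc_ne {len : ℕ} (hlen : 3 ≤ len) (i : Fin len) : cyc (cyc i) ≠ i := by
  intro h
  have h' : ((i.1 + 1) % len + 1) % len = i.1 := congrArg Fin.val h
  have := i.2
  rcases Nat.lt_or_ge (i.1 + 1) len with h1 | h1
  · rw [Nat.mod_eq_of_lt h1] at h'
    rcases Nat.lt_or_ge (i.1 + 2) len with h2 | h2
    · rw [Nat.mod_eq_of_lt (by omega : i.1 + 1 + 1 < len)] at h'; omega
    · have : i.1 + 1 + 1 = len := by omega
      rw [this, Nat.mod_self] at h'; omega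
  · have hl : i.1 + 1 = len := by omega
    rw [hl, Nat.mod_self, Nat.mod_eq_of_lt (by omega : 1 < len)] at h'; omega

/-- uniqueness of an edge between a pair of distinct vertices -/
lemma uniq_edge (hs : IsSimpleDigraph E) {j k : Fin n} {u v : Fin m} (huv : u ≠ v)
    (hj : E j = (u, v) ∨ E j = (v, u)) (hk : E k = (u, v) ∨ E k = (v, u)) : j = k := by
  by_contra hne
  obtain ⟨h1, h2⟩ := hs.2 j k hne
  rcases hj with hj | hj <;> rcases hk with hk | hk
  · exact h1 (hj.trans hk.symm)
  · exact h2 (by rw [hj, hk])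
  · exact h2 (by rw [hj, hk])
  · exact h1 (hj.trans hk.symm)

end

section
variable {m n : ℕ} {E : Fin n → Fin m × Fin m}

/-- a chosen edge realizing step `i` of the cycle -/
noncomputable def Cedge (C : SimpleCycleIn m n E) (i : Fin C.len) : Fin n :=
  (C.edges i).choose

lemma Cedge_spec (C : SimpleCycleIn m n E) (i : Fin C.len) :
    E (Cedge C i) = (C.vert i, C.vert (cyc i)) ∨
    E (Cedge C i) = (C.vert (cyc i), C.vert i) :=
  (C.edges i).choose_spec

lemma vert_cyc_ne (C : SimpleCycleIn m n E) (i : Fin C.len) :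
    C.vert (cyc i) ≠ C.vert i := fun h => cyc_ne C.hlen i (C.inj h)

lemma not_both (C : SimpleCycleIn m n E) (j : Fin n) :
    ¬((∃ i, E j = (C.vert i, C.vert (cyc i))) ∧
      (∃ i, E j = (C.vert (cyc i), C.vert i))) := by
  rintro ⟨⟨i, hi⟩, ⟨i', hi'⟩⟩
  rw [hi] at hi'
  have h1 : i = cyc i' := C.inj (congrArg Prod.fst hi')
  have h2 : cyc i = i' := C.inj (congrArg Prod.snd hi')
  exact cyc_cyc_ne C.hlen i' (by rw [← h1, h2])

lemma sChar_cases (C : SimpleCycleIn m n E) (j : Fin n) :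
    sChar C j = 0 ∨ sChar C j = 1 ∨ sChar C j = -1 := by
  unfold sChar; split_ifs <;> simp

lemma sChar_Cedge (C : SimpleCycleIn m n E) (i : Fin C.len) :
    (E (Cedge C i) = (C.vert i, C.vert (cyc i)) ∧ sChar C (Cedge C i) = 1) ∨
    (E (Cedge C i) = (C.vert (cyc i), C.vert i) ∧ sChar C (Cedge C i) = -1) := by
  rcases Cedge_spec C i with h | h
  · exact Or.inl ⟨h, by unfold sChar; rw [if_pos ⟨i, h⟩]⟩
  · refine Or.inr ⟨h, ?_⟩
    unfold sChar
    rw [if_neg (fun h1 => not_both C _ ⟨h1, ⟨i, h⟩⟩), if_pos ⟨i, h⟩]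

lemma sChar_ne_zero_iff (hs : IsSimpleDigraph E) (C : SimpleCycleIn m n E) (j : Fin n) :
    sChar C j ≠ 0 ↔ ∃ i, j = Cedge C i := by
  constructor
  · intro hj
    unfold sChar at hj
    by_cases h1 : ∃ i, E j = (C.vert i, C.vert (cyc i))
    · obtain ⟨i, hi⟩ := h1
      exact ⟨i, uniq_edge hs (vert_cyc_ne C i).symm (Or.inl hi) (Cedge_spec C i)⟩
    · rw [if_neg h1] at hj
      by_cases h2 : ∃ i, E j = (C.vert (cyc i), C.vert i)
      · obtain ⟨i, hi⟩ := h2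
        exact ⟨i, uniq_edge hs (vert_cyc_ne C i).symm (Or.inr hi) (Cedge_spec C i)⟩
      · rw [if_neg h2] at hj; exact absurd rfl hj
  · rintro ⟨i, rfl⟩
    rcases sChar_Cedge C i with ⟨_, h⟩ | ⟨_, h⟩ <;> rw [h] <;> norm_num

lemma Cedge_inj (C : SimpleCycleIn m n E) : Function.Injective (Cedge C) := by
  intro i i' h
  have hi := Cedge_spec C i
  have hi' := Cedge_spec C i'
  rw [h] at hi
  rcases hi with hi | hi <;> rcases hi' with hi' | hi' <;> rw [hi'] at hi <;>
    obtain ⟨ha, hb⟩ := Prod.mk.inj hi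
  · exact C.inj ha.symm
  · have h1 : i = cyc i' := C.inj ha.symm
    have h2 : cyc i = i' := C.inj hb.symm
    exact absurd (by rw [← h1, h2]) (cyc_cyc_ne C.hlen i')
  · have h1 : cyc i = i' := C.inj ha.symm
    have h2 : i = cyc i' := C.inj hb.symm
    exact absurd (by rw [← h2, h1]) (cyc_cyc_ne C.hlen i')
  · exact C.inj hb.symm

lemma suppF_sChar (hs : IsSimpleDigraph E) (C : SimpleCycleIn m n E) :
    suppF (sChar C) = Finset.image (Cedge C) Finset.univ := by
  ext j
  simp [suppF, sChar_ne_zero_iff hs, eq_comm]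

lemma suppF_sChar_nonempty (hs : IsSimpleDigraph E) (C : SimpleCycleIn m n E) :
    (suppF (sChar C)).Nonempty := by
  rw [suppF_sChar hs C]
  have : (0 : ℕ) < C.len := by have := C.hlen; omega
  exact ⟨Cedge C ⟨0, this⟩, Finset.mem_image_of_mem _ (Finset.mem_univ _)⟩

lemma sChar_ne_zero (hs : IsSimpleDigraph E) (C : SimpleCycleIn m n E) :
    sChar C ≠ 0 := by
  obtain ⟨j, hj⟩ := suppF_sChar_nonempty hs C
  simp only [suppF, Finset.mem_filter] at hj
  intro h; exact hj.2 (by rw [h]; rfl)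

lemma mulVec_sChar (hs : IsSimpleDigraph E) (C : SimpleCycleIn m n E) :
    (IncMatrix E).mulVec (sChar C) = 0 := by
  funext u
  show ∑ j, IncMatrix E u j * sChar C j = 0
  have h0 : ∀ j ∈ Finset.univ, j ∉ Finset.image (Cedge C) Finset.univ →
      IncMatrix E u j * sChar C j = 0 := by
    intro j _ hj
    have : sChar C j = 0 := by
      by_contra h
      obtain ⟨i, rfl⟩ := (sChar_ne_zero_iff hs C j).mp h
      exact hj (Finset.mem_image_of_mem _ (Finset.mem_univ _))
    rw [this, mul_zero]
  rw [← Finset.sum_subset (Finset.subset_univ _) h0,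
    Finset.sum_image (fun i _ i' _ h => Cedge_inj C h)]
  have hterm : ∀ i, IncMatrix E u (Cedge C i) * sChar C (Cedge C i) =
      (if C.vert (cyc i) = u then (1:ℝ) else 0) - (if C.vert i = u then 1 else 0) := by
    intro i
    have hne := vert_cyc_ne C i
    rcases sChar_Cedge C i with ⟨hE, hw⟩ | ⟨hE, hw⟩ <;>
      rw [hw] <;> simp only [IncMatrix, Matrix.of_apply, hE] <;>
      by_cases h1 : C.vert i = u <;> by_cases h2 : C.vert (cyc i) = u
    · exact absurd (h2.trans h1.symm) hne
    · simp [h1, h2]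
    · simp [h1, h2]
    · simp [h1, h2]
    · exact absurd (h2.trans h1.symm) hne
    · simp [h1, h2]
    · simp [h1, h2]
    · simp [h1, h2]
  simp_rw [hterm]
  rw [Finset.sum_sub_distrib]
  have hbij : Function.Bijective (cyc (len := C.len)) :=
    (Finite.injective_iff_bijective).mp cyc_inj
  rw [Fintype.sum_bijective cyc hbij
    (fun i => if C.vert (cyc i) = u then (1:ℝ) else 0)
    (fun i => if C.vert i = u then (1:ℝ) else 0) (fun i => rfl)]
  ring

lemma l1S_sChar (C : SimpleCycleIn m n E) (T : Finset (Fin n)) :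
    l1S T (sChar C) = ((T ∩ suppF (sChar C)).card : ℝ) := by
  have habs : ∀ j, |sChar C j| = if j ∈ suppF (sChar C) then (1:ℝ) else 0 := by
    intro j
    by_cases hj : sChar C j = 0
    · simp [suppF, hj]
    · rcases sChar_cases C j with h | h | h
      · exact absurd h hj
      · simp [suppF, hj, h]
      · simp [suppF, hj, h]
  unfold l1S
  simp_rw [habs]
  rw [Finset.sum_ite_mem, Finset.sum_const]
  simp

lemma l1_sChar (C : SimpleCycleIn m n E) :
    l1 (sChar C) = ((suppF (sChar C)).card : ℝ) := by
  have := l1S_sChar C Finset.univ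
  rw [Finset.univ_inter] at this
  exact this

end

section
variable {m n : ℕ} {E : Fin n → Fin m × Fin m}

lemma extract_cycle (hs : IsSimpleDigraph E) (η : Fin n → ℝ)
    (hnull : (IncMatrix E).mulVec η = 0) (hne : η ≠ 0) :
    ∃ C : SimpleCycleIn m n E,
      ∀ j, (sChar C j = 1 → 0 < η j) ∧ (sChar C j = -1 → η j < 0) := by
  classical
  set t : Fin m → Fin n → ℝ := fun v j => IncMatrix E v j * η j with ht
  have hsum : ∀ v, ∑ j, t v j = 0 := by
    intro v
    have := congrFun hnull v
    simpa [Matrix.mulVec, dotProduct, ht] using this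
  have hcons : ∀ v, (∃ j, 0 < t v j) → ∃ j, t v j < 0 := by
    rintro v ⟨j, hj⟩
    by_contra h
    push_neg at h
    have hpos : 0 < ∑ j, t v j :=
      Finset.sum_pos' (fun i _ => h i) ⟨j, Finset.mem_univ j, hj⟩
    rw [hsum v] at hpos; exact lt_irrefl 0 hpos
  set hd : Fin n → Fin m := fun j => if 0 < η j then (E j).2 else (E j).1 with hhd
  have hstep : ∀ v j, t v j < 0 → 0 < t (hd j) j ∧ hd j ≠ v ∧ η j ≠ 0 ∧
      (0 < η j → E j = (v, hd j)) ∧ (η j < 0 → E j = (hd j, v)) := by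
    intro v j hvj
    have hEne := hs.1 j
    rcases lt_trichotomy (η j) 0 with hη | hη | hη
    · -- η j < 0 : flow direction is reversed; v must be the terminal vertex
      have hd_eq : hd j = (E j).1 := by rw [hhd]; simp [not_lt.mpr (le_of_lt hη)]
      have hv : (E j).2 = v := by
        by_contra hv
        have h1 : (E j).1 = v → t v j = -η j := by
          intro h; simp [ht, IncMatrix, h]
        by_cases h2 : (E j).1 = v
        · rw [h1 h2] at hvj; linarith
        · have : t v j = 0 := by simp [ht, IncMatrix, h2, hv]
          rw [this] at hvj; exact lt_irrefl 0 hvj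
      have h3 : t (hd j) j = -η j := by
        rw [hd_eq]; simp [ht, IncMatrix]
      refine ⟨by rw [h3]; linarith, ?_, ne_of_lt hη, fun h => absurd h (by linarith),
        fun _ => ?_⟩
      · rw [hd_eq, ← hv]; exact hEne
      · rw [hd_eq, ← hv]
    · exfalso; rw [ht] at hvj; simp only [hη, mul_zero] at hvj; exact lt_irrefl 0 hvj
    · -- 0 < η j : v must be the initial vertex
      have hd_eq : hd j = (E j).2 := by rw [hhd]; simp [hη]
      have hv : (E j).1 = v := by
        by_contra hv
        by_cases h2 : (E j).2 = v
        · have : t v j = η j := by simp [ht, IncMatrix, hv, h2]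
          rw [this] at hvj; linarith
        · have : t v j = 0 := by simp [ht, IncMatrix, hv, h2]
          rw [this] at hvj; exact lt_irrefl 0 hvj
      have h3 : t (hd j) j = η j := by
        rw [hd_eq]
        show IncMatrix E (E j).2 j * η j = η j
        simp only [IncMatrix, Matrix.of_apply]
        rw [if_neg hEne]; simp
      refine ⟨by rw [h3]; linarith, ?_, ne_of_gt hη, fun _ => ?_,
        fun h => absurd h (by linarith)⟩
      · rw [hd_eq, ← hv]; exact Ne.symm hEne
      · rw [hd_eq, ← hv]
  obtain ⟨j₀, hj₀⟩ := Function.ne_iff.mp hne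
  have hj₀' : η j₀ ≠ 0 := hj₀
  -- a vertex from which flow leaves along j₀
  set tl : Fin m := if 0 < η j₀ then (E j₀).1 else (E j₀).2 with htl
  have htl0 : t tl j₀ < 0 := by
    rcases lt_trichotomy (η j₀) 0 with hη | hη | hη
    · have : tl = (E j₀).2 := by rw [htl]; simp [not_lt.mpr (le_of_lt hη)]
      rw [this]
      have : t (E j₀).2 j₀ = η j₀ := by
        show IncMatrix E (E j₀).2 j₀ * η j₀ = η j₀
        simp only [IncMatrix, Matrix.of_apply]
        rw [if_neg (hs.1 j₀)]; simp
      rw [this]; exact hη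
    · exact absurd hη hj₀'
    · have : tl = (E j₀).1 := by rw [htl]; simp [hη]
      rw [this]
      have : t (E j₀).1 j₀ = -η j₀ := by simp [ht, IncMatrix]
      rw [this]; linarith
  set P : Fin m → Prop := fun v => ∃ j, t v j < 0 with hP
  have hchoice : ∀ v, ∃ j, (P v → t v j < 0) := by
    intro v
    by_cases hv : P v
    · obtain ⟨j, hj⟩ := hv; exact ⟨j, fun _ => hj⟩
    · exact ⟨j₀, fun h => absurd h hv⟩
  choose je hje using hchoice
  set v₀ : Fin m := hd j₀ with hv₀def
  have hPtl : P tl := ⟨j₀, htl0⟩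
  have hv₀ : 0 < t v₀ j₀ := (hstep tl j₀ htl0).1
  have hP₀ : P v₀ := hcons v₀ ⟨j₀, hv₀⟩
  set nxt : Fin m → Fin m := fun v => hd (je v) with hnxt
  set f : ℕ → Fin m := fun k => nxt^[k] v₀ with hf
  have hfsucc : ∀ k, f (k + 1) = nxt (f k) := by
    intro k; rw [hf]; exact Function.iterate_succ_apply' nxt k v₀
  have hPf : ∀ k, P (f k) := by
    intro k
    induction k with
    | zero => exact hP₀
    | succ k ih =>
      rw [hfsucc k]
      have h1 := hje (f k) ih
      exact hcons _ ⟨je (f k), (hstep _ _ h1).1⟩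
  set jw : ℕ → Fin n := fun k => je (f k) with hjw
  have hedge : ∀ k, t (f k) (jw k) < 0 ∧ 0 < t (f (k + 1)) (jw k) ∧ η (jw k) ≠ 0 ∧
      (0 < η (jw k) → E (jw k) = (f k, f (k + 1))) ∧
      (η (jw k) < 0 → E (jw k) = (f (k + 1), f k)) ∧ f (k + 1) ≠ f k := by
    intro k
    have h1 := hje (f k) (hPf k)
    have h2 := hstep (f k) (jw k) h1
    rw [hfsucc k, hnxt]
    exact ⟨h1, h2.1, h2.2.2.1, h2.2.2.2.1, h2.2.2.2.2, h2.2.1⟩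
  have hEor : ∀ k, E (jw k) = (f k, f (k + 1)) ∨ E (jw k) = (f (k + 1), f k) := by
    intro k
    obtain ⟨_, _, hη, hp, hn, _⟩ := hedge k
    rcases lt_trichotomy (η (jw k)) 0 with h | h | h
    · exact Or.inr (hn h)
    · exact absurd h hη
    · exact Or.inl (hp h)
  have hnb : ∀ k, f (k + 2) ≠ f k := by
    intro k h
    have huv : f k ≠ f (k + 1) := ((hedge k).2.2.2.2.2).symm
    have hj1 : E (jw k) = (f k, f (k + 1)) ∨ E (jw k) = (f (k + 1), f k) := hEor k
    have hj2 : E (jw (k + 1)) = (f k, f (k + 1)) ∨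
        E (jw (k + 1)) = (f (k + 1), f k) := by
      have := hEor (k + 1)
      rw [(by omega : k + 1 + 1 = k + 2), h] at this
      tauto
    have heq : jw k = jw (k + 1) := uniq_edge hs huv hj1 hj2
    have ha := (hedge k).2.1
    have hb := (hedge (k + 1)).1
    rw [← heq] at hb
    linarith
  -- pigeonhole: the walk repeats a vertex
  have hrep : ∃ b, ∃ a, a < b ∧ f a = f b := by
    obtain ⟨a, b, hab, hfab⟩ :=
      Fintype.exists_ne_map_eq_of_card_lt (fun k : Fin (m + 1) => f k.1) (by simp)
    rcases Nat.lt_trichotomy a.1 b.1 with h | h | h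
    · exact ⟨b.1, a.1, h, hfab⟩
    · exact absurd (Fin.ext h) hab
    · exact ⟨a.1, b.1, h, hfab.symm⟩
  set b := Nat.find hrep with hb
  obtain ⟨a, hab, hfab⟩ := Nat.find_spec hrep
  rw [← hb] at hab hfab
  have hmin : ∀ c d, c < d → d < b → f c ≠ f d := by
    intro c d hcd hdb hf'
    exact Nat.find_min hrep hdb ⟨c, hcd, hf'⟩
  have hlen3 : 3 ≤ b - a := by
    have h1 : b ≠ a + 1 := by
      intro h; rw [h] at hfab
      exact (hedge a).2.2.2.2.2 hfab.symm
    have h2 : b ≠ a + 2 := by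
      intro h; rw [h] at hfab
      exact hnb a hfab.symm
    omega
  have hwrap : ∀ i : Fin (b - a), f (a + ((i.1 + 1) % (b - a))) = f (a + i.1 + 1) := by
    intro i
    rcases Nat.lt_or_ge (i.1 + 1) (b - a) with h | h
    · rw [Nat.mod_eq_of_lt h, ← Nat.add_assoc]
    · have hi2 := i.2
      have : i.1 + 1 = b - a := by omega
      rw [this, Nat.mod_self]
      have : a + i.1 + 1 = b := by omega
      rw [this]; simpa using hfab
  have hinj : Function.Injective (fun i : Fin (b - a) => f (a + i.1)) := by
    intro i i' hii
    simp only at hii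
    rcases Nat.lt_trichotomy i.1 i'.1 with h | h | h
    · exact absurd hii (hmin (a + i.1) (a + i'.1) (by omega) (by have := i'.2; omega))
    · exact Fin.ext h
    · exact absurd hii.symm
        (hmin (a + i'.1) (a + i.1) (by omega) (by have := i.2; omega))
  have hedges : ∀ i : Fin (b - a), ∃ j : Fin n,
      E j = ((fun i : Fin (b - a) => f (a + i.1)) i,
             (fun i : Fin (b - a) => f (a + i.1)) (cyc i)) ∨
      E j = ((fun i : Fin (b - a) => f (a + i.1)) (cyc i),
             (fun i : Fin (b - a) => f (a + i.1)) i) := by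
    intro i
    refine ⟨jw (a + i.1), ?_⟩
    have := hEor (a + i.1)
    simp only [cyc]
    rw [hwrap i]
    exact this
  set C : SimpleCycleIn m n E := ⟨b - a, hlen3, fun i => f (a + i.1), hinj, hedges⟩
    with hC
  refine ⟨C, fun j => ⟨?_, ?_⟩⟩
  · intro h1
    have hvert : ∃ i : Fin (b - a), E j = (f (a + i.1), f (a + i.1 + 1)) := by
      unfold sChar at h1
      split_ifs at h1 with hp1 hp2
      · obtain ⟨i, hi⟩ := hp1
        refine ⟨i, ?_⟩
        have : C.vert (cyc i) = f (a + i.1 + 1) := by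
          show f (a + ((i.1 + 1) % (b - a))) = _
          exact hwrap i
        rw [← this]; exact hi
      · norm_num at h1
      · norm_num at h1
    obtain ⟨i, hi⟩ := hvert
    set k := a + i.1 with hk
    have huv : f k ≠ f (k + 1) := ((hedge k).2.2.2.2.2).symm
    have hjeq : j = jw k := uniq_edge hs huv (Or.inl hi) (hEor k)
    obtain ⟨_, _, hη, _, hn, _⟩ := hedge k
    rw [hjeq]
    rcases lt_trichotomy (η (jw k)) 0 with h | h | h
    · exfalso
      have := hn h
      rw [hjeq] at hi
      rw [this] at hi
      exact huv (congrArg Prod.fst hi).symm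
    · exact absurd h hη
    · exact h
  · intro h1
    have hvert : ∃ i : Fin (b - a), E j = (f (a + i.1 + 1), f (a + i.1)) := by
      unfold sChar at h1
      split_ifs at h1 with hp1 hp2
      · norm_num at h1
      · obtain ⟨i, hi⟩ := hp2
        refine ⟨i, ?_⟩
        have : C.vert (cyc i) = f (a + i.1 + 1) := by
          show f (a + ((i.1 + 1) % (b - a))) = _
          exact hwrap i
        rw [← this]; exact hi
      · norm_num at h1
    obtain ⟨i, hi⟩ := hvert
    set k := a + i.1 with hk
    have huv : f k ≠ f (k + 1) := ((hedge k).2.2.2.2.2).symm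
    have hjeq : j = jw k := uniq_edge hs huv (Or.inr hi) (hEor k)
    obtain ⟨_, _, hη, hp, _, _⟩ := hedge k
    rw [hjeq]
    rcases lt_trichotomy (η (jw k)) 0 with h | h | h
    · exact h
    · exact absurd h hη
    · exfalso
      have := hp h
      rw [hjeq] at hi
      rw [this] at hi
      exact huv (congrArg Prod.fst hi)
  
end

section
variable {m n : ℕ} {E : Fin n → Fin m × Fin m}

lemma suppF_smul {c : ℝ} (hc : c ≠ 0) (x : Fin n → ℝ) : suppF (c • x) = suppF x := by
  ext j
  simp [suppF, Pi.smul_apply, smul_eq_mul, mul_eq_zero, hc]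

lemma half_iff (hs : IsSimpleDigraph E) (C : SimpleCycleIn m n E) (S : Finset (Fin n)) :
    l1S S (sChar C) < l1S Sᶜ (sChar C) ↔
    ((S ∩ suppF (sChar C)).card : ℝ) / ((suppF (sChar C)).card : ℝ) < 1 / 2 := by
  set P := suppF (sChar C) with hP
  have hp : 0 < P.card := Finset.card_pos.mpr (suppF_sChar_nonempty hs C)
  have hcompl : Sᶜ ∩ P = P \ S := by
    ext j; simp [Finset.mem_sdiff, and_comm]
  have hsplit : (P \ S).card + (P ∩ S).card = P.card := Finset.card_sdiff_add_card_inter P S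
  have hic : (S ∩ P).card = (P ∩ S).card := by rw [Finset.inter_comm]
  rw [l1S_sChar, l1S_sChar, hcompl,
    div_lt_div_iff₀ (by exact_mod_cast hp) (by norm_num : (0:ℝ) < 2)]
  constructor
  · intro h
    have hn : (S ∩ P).card < (P \ S).card := by exact_mod_cast h
    have : 2 * (S ∩ P).card < P.card := by omega
    have goal : (S ∩ P).card * 2 < 1 * P.card := by omega
    exact_mod_cast goal
  · intro h
    have hn : (S ∩ P).card * 2 < 1 * P.card := by exact_mod_cast h
    have goal : (S ∩ P).card < (P \ S).card := by omega
    exact_mod_cast goal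

lemma W1_mem (C : SimpleCycleIn m n E) : (l1 (sChar C))⁻¹ • sChar C ∈ W1 E := ⟨C, rfl⟩

lemma suppF_W1 (hs : IsSimpleDigraph E) (C : SimpleCycleIn m n E) :
    suppF ((l1 (sChar C))⁻¹ • sChar C) = suppF (sChar C) := by
  have hp : 0 < (suppF (sChar C)).card := Finset.card_pos.mpr (suppF_sChar_nonempty hs C)
  have hl1 : l1 (sChar C) ≠ 0 := by
    rw [l1_sChar C]
    exact Nat.cast_ne_zero.mpr (Nat.pos_iff_ne_zero.mp hp)
  exact suppF_smul (inv_ne_zero hl1) _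
end


/-- Let `G` be a simple directed graph with incidence matrix `A ∈ ℝ^{m×n}` whose nullspace
is nontrivial.  Then `T_max(A)` equals the collection of edge index sets `S` such that for
every `z ∈ W₁(G)` one has `|S ∩ supp z| / ‖z‖₀ < 1/2`, i.e. `S` contains strictly fewer
than half of the edges of every simple cycle of `G`. -/
theorem stmt10 {m n : ℕ} (E : Fin n → Fin m × Fin m) (hsimple : IsSimpleDigraph E)
    (hker : ∃ η : Fin n → ℝ, η ≠ 0 ∧ (IncMatrix E).mulVec η = 0) :
    Tmax (IncMatrix E) = {S : Finset (Fin n) |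
      ∀ z ∈ W1 E, ((S ∩ suppF z).card : ℝ) / ((suppF z).card : ℝ) < 1 / 2} := by

  ext S
  constructor
  · -- forward
    intro hS z hz
    obtain ⟨C, rfl⟩ := hz
    rw [suppF_W1 hsimple C]
    rw [← half_iff hsimple C S]
    exact hS (sChar C) (mulVec_sChar hsimple C) (sChar_ne_zero hsimple C)
  · -- backward
    intro hS
    have hcyc : ∀ C : SimpleCycleIn m n E, l1S S (sChar C) < l1S Sᶜ (sChar C) := by
      intro C
      rw [half_iff hsimple C S]
      have := hS ((l1 (sChar C))⁻¹ • sChar C) (W1_mem C)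
      rwa [suppF_W1 hsimple C] at this
    intro η hnull hne
    -- strong induction on the size of the support
    suffices key : ∀ N : ℕ, ∀ η : Fin n → ℝ, (suppF η).card ≤ N →
        (IncMatrix E).mulVec η = 0 → η ≠ 0 → l1S S η < l1S Sᶜ η by
      exact key _ η le_rfl hnull hne
    intro N
    induction N with
    | zero =>
      intro η hcard hnull hne
      exfalso
      obtain ⟨j, hj⟩ := Function.ne_iff.mp hne
      have hjm : j ∈ suppF η := by simp [suppF]; exact hj
      have := Finset.card_pos.mpr ⟨j, hjm⟩
      omega
    | succ N ih =>
      intro η hcard hnull hne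
      obtain ⟨C, hconf⟩ := extract_cycle hsimple η hnull hne
      set w := sChar C with hw
      set P := suppF w with hPdef
      have hPne : P.Nonempty := suppF_sChar_nonempty hsimple C
      have hmemP : ∀ j, j ∈ P ↔ w j ≠ 0 := by intro j; simp [hPdef, suppF]
      have hηP : ∀ j ∈ P, η j ≠ 0 := by
        intro j hj
        have hwj : w j ≠ 0 := (hmemP j).mp hj
        rcases sChar_cases C j with h | h | h <;> rw [← hw] at h
        · exact absurd h hwj
        · exact ne_of_gt ((hconf j).1 h)
        · exact ne_of_lt ((hconf j).2 h)
      set lam := P.inf' hPne (fun j => |η j|) with hlam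
      have hlam_le : ∀ j ∈ P, lam ≤ |η j| := fun j hj => Finset.inf'_le _ hj
      obtain ⟨js, hjs, hjseq⟩ := Finset.exists_mem_eq_inf' hPne (fun j => |η j|)
      have hlam_pos : 0 < lam := by
        rw [hlam, hjseq]
        exact abs_pos.mpr (hηP js hjs)
      set η' : Fin n → ℝ := fun j => η j - lam * w j with hη'
      have habs : ∀ j, |η j| = |η' j| + lam * |w j| := by
        intro j
        rcases sChar_cases C j with h | h | h <;> rw [← hw] at h
        · show |η j| = |η j - lam * w j| + lam * |w j|
          rw [h]; simp
        · have hp := (hconf j).1 h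
          have hle : lam ≤ η j := by
            have := hlam_le j ((hmemP j).mpr (by rw [h]; norm_num))
            rwa [abs_of_pos hp] at this
          show |η j| = |η j - lam * w j| + lam * |w j|
          rw [h, mul_one, abs_one, mul_one, abs_of_pos hp,
            abs_of_nonneg (by linarith)]
          ring
        · have hp := (hconf j).2 h
          have hle : lam ≤ -η j := by
            have := hlam_le j ((hmemP j).mpr (by rw [h]; norm_num))
            rwa [abs_of_neg hp] at this
          show |η j| = |η j - lam * w j| + lam * |w j|
          rw [h, abs_of_neg hp, abs_neg, abs_one, mul_one,
            (by ring : η j - lam * (-1) = η j + lam), abs_of_nonpos (by linarith)]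
          ring
      have hl1S : ∀ T : Finset (Fin n), l1S T η = l1S T η' + lam * l1S T w := by
        intro T
        unfold l1S
        rw [Finset.mul_sum, ← Finset.sum_add_distrib]
        exact Finset.sum_congr rfl (fun j _ => habs j)
      have hsub : suppF η' ⊆ suppF η := by
        intro j hj
        simp only [suppF, Finset.mem_filter, Finset.mem_univ, true_and] at hj ⊢
        intro h0
        apply hj
        have hwj : w j = 0 := by
          rcases sChar_cases C j with h | h | h <;> rw [← hw] at h
          · exact h
          · exact absurd h0 (ne_of_gt ((hconf j).1 h))
          · exact absurd h0 (ne_of_lt ((hconf j).2 h))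
        show η j - lam * w j = 0
        rw [h0, hwj]; ring
      have hjs_not : js ∉ suppF η' := by
        simp only [suppF, Finset.mem_filter, Finset.mem_univ, true_and, not_not]
        have h1 : |η' js| = |η js| - lam * |w js| := by have := habs js; linarith
        have hwjs : |w js| = 1 := by
          rcases sChar_cases C js with h | h | h <;> rw [← hw] at h
          · exact absurd h ((hmemP js).mp hjs)
          · rw [h]; norm_num
          · rw [h]; norm_num
        rw [hwjs, mul_one, ← hjseq] at h1
        have : |η' js| = 0 := by linarith
        exact abs_eq_zero.mp this
      have hjs_mem : js ∈ suppF η := by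
        simp only [suppF, Finset.mem_filter, Finset.mem_univ, true_and]
        exact hηP js hjs
      have hcard' : (suppF η').card < (suppF η).card :=
        Finset.card_lt_card ((Finset.ssubset_iff_of_subset hsub).mpr
          ⟨js, hjs_mem, hjs_not⟩)
      have hnull' : (IncMatrix E).mulVec η' = 0 := by
        have heq : η' = η - lam • w := by
          funext j
          simp [hη', Pi.sub_apply, Pi.smul_apply, smul_eq_mul]
        rw [heq, Matrix.mulVec_sub, Matrix.mulVec_smul, hnull, mulVec_sChar hsimple C]
        simp
      have h2 : lam * l1S S w < lam * l1S Sᶜ w :=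
        mul_lt_mul_of_pos_left (hcyc C) hlam_pos
      have h1 : l1S S η' ≤ l1S Sᶜ η' := by
        by_cases hz : η' = 0
        · rw [hz]; unfold l1S; simp
        · exact le_of_lt (ih η' (by omega) hnull' hz)
      rw [hl1S S, hl1S Sᶜ]
      linarith
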